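/- Let k ≥ 2 and let Γ_k be the graph on [3]^k whose edges are the pairs {x,y} of distinct tuples with |x_(i) − y_(i)| ≤ 1 for every i ∈ [k]. For any graph H2 on [3]^k with K̄_[k]∘H2 ∈ C_k, one has |E(H2)| ≤ (7^k − 3^k)/2, with equality if and only if H2 = Γ_k. -/

import Mathlib

open SimpleGraph

/-- `w` enumerates a `(k, m)`-completeness-resolving set of `G`:
`w` is injective, its range `W` is a proper subset of the vertex set, and the map
`u ↦ (dist (w 1) u, …, dist (w k) u)` is a bijection from `V ∖ W` onto `[m]^k`. -/
def IsCRS {V : Type*} (G : SimpleGraph V) {k : ℕ} (w : Fin k → V) (m : ℕ) : Prop :=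
  Function.Injective w ∧ Set.range w ≠ Set.univ ∧
    Function.Injective
      (fun u : {u : V // u ∉ Set.range w} => fun i : Fin k => G.dist (w i) u.1) ∧
    Set.range (fun u : {u : V // u ∉ Set.range w} => fun i : Fin k => G.dist (w i) u.1) =
      {x : Fin k → ℕ | ∀ i, 1 ≤ x i ∧ x i ≤ m}

/-- `G` is a `(k, m)`-completeness-resolvable graph. -/
def IsCRG {V : Type*} (G : SimpleGraph V) (k m : ℕ) : Prop :=
  ∃ w : Fin k → V, IsCRS G w m

/-- `G` is completeness-resolvable. -/
def CompletenessResolvable {V : Type*} (G : SimpleGraph V) : Prop :=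
  ∃ (k m : ℕ) (w : Fin k → V), IsCRS G w m

/-! ### The family `B_k`.
Tuples in `[2]^k` are modelled as functions `Fin k → Fin 2`, the `Fin 2`-value `j`
corresponding to the entry `j + 1 ∈ {1, 2}`. -/

/-- The graph `H1 ∘ H2` on `[k] ⊔ [2]^k`. -/
def comp2 {k : ℕ} (H1 : SimpleGraph (Fin k)) (H2 : SimpleGraph (Fin k → Fin 2)) :
    SimpleGraph (Fin k ⊕ (Fin k → Fin 2)) where
  Adj a b :=
    match a, b with
    | Sum.inl i, Sum.inl j => H1.Adj i j
    | Sum.inr x, Sum.inr y => H2.Adj x y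
    | Sum.inl i, Sum.inr x => x i = 0
    | Sum.inr x, Sum.inl i => x i = 0
  symm := by
    refine ⟨?_⟩
    rintro (i | x) (j | y) h
    · exact H1.adj_symm h
    · exact h
    · exact h
    · exact H2.adj_symm h
  loopless := by
    refine ⟨?_⟩
    rintro (i | x) h
    · exact H1.ne_of_adj h rfl
    · exact H2.ne_of_adj h rfl

/-- The defining condition of `B_k`: for each `i`, the edges of `H2` lying in the complete
bipartite graph `B_i^k` (i.e. joining a tuple with `i`-th entry `1` to one with `i`-th entry `2`)
cover every tuple all of whose entries on the closed neighbourhood of `i` in `H1` equal `2`. -/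
def BCond {k : ℕ} (H1 : SimpleGraph (Fin k)) (H2 : SimpleGraph (Fin k → Fin 2)) : Prop :=
  ∀ (i : Fin k) (x : Fin k → Fin 2),
    (∀ j : Fin k, (j = i ∨ H1.Adj i j) → x j = 1) →
    ∃ y : Fin k → Fin 2, H2.Adj x y ∧ y i ≠ x i

/-- The family `B_k`, as a set of graphs on `[k] ⊔ [2]^k`. -/
def Bset (k : ℕ) : Set (SimpleGraph (Fin k ⊕ (Fin k → Fin 2))) :=
  {G | ∃ H1 H2, BCond H1 H2 ∧ G = comp2 H1 H2}

/-- `H2` is `H1`-minimal. -/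
def H1Minimal {k : ℕ} (H1 : SimpleGraph (Fin k)) (H2 : SimpleGraph (Fin k → Fin 2)) : Prop :=
  comp2 H1 H2 ∈ Bset k ∧
    ∀ H2' : SimpleGraph (Fin k → Fin 2), H2' < H2 → comp2 H1 H2' ∉ Bset k

/-- The graph `U_k` on `[2]^k`, with unique edge `{(1,…,1), (2,…,2)}`. -/
def Uk (k : ℕ) : SimpleGraph (Fin k → Fin 2) :=
  SimpleGraph.fromEdgeSet {s(fun _ => (0 : Fin 2), fun _ => (1 : Fin 2))}

/-- The graph `V_k` on `[2]^k`, whose edges join `(2,…,2)` to the tuples having exactly one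
entry equal to `1`. -/
def Vk (k : ℕ) : SimpleGraph (Fin k → Fin 2) :=
  SimpleGraph.fromEdgeSet
    {e | ∃ i : Fin k, e = s(Function.update (fun _ => (1 : Fin 2)) i 0, fun _ => (1 : Fin 2))}

/-- The graph `R_k` on `[2]^k`: the perfect matching pairing each tuple with its complement. -/
def Rk (k : ℕ) : SimpleGraph (Fin k → Fin 2) :=
  SimpleGraph.fromRel fun x y => ∀ i, x i ≠ y i

/-- The hypercube graph `Q_k` on `[2]^k`: tuples are adjacent when they differ in exactly one
coordinate. -/
def Qk (k : ℕ) : SimpleGraph (Fin k → Fin 2) :=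
  SimpleGraph.fromRel fun x y => ∃ i, x i ≠ y i ∧ ∀ j, j ≠ i → x j = y j

/-! ### The family `C_k`.
Tuples in `[3]^k` are modelled as functions `Fin k → Fin 3`, the `Fin 3`-value `j`
corresponding to the entry `j + 1 ∈ {1, 2, 3}`. -/

/-- Entries `a` and `b` (of `{1,2,3}`, coded in `Fin 3`) satisfy `|a - b| ≤ 1`. -/
def near3 (a b : Fin 3) : Prop := (a : ℕ) ≤ (b : ℕ) + 1 ∧ (b : ℕ) ≤ (a : ℕ) + 1

/-- `{x, y}` is an edge of the bipartite graph `C_i^k` (between `i`-th entry `1` and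
`i`-th entry `2`, with all other entries differing by at most `1`). -/
def CAdj {k : ℕ} (i : Fin k) (x y : Fin k → Fin 3) : Prop :=
  ((x i = 0 ∧ y i = 1) ∨ (x i = 1 ∧ y i = 0)) ∧ ∀ t, t ≠ i → near3 (x t) (y t)

/-- `{x, y}` is an edge of the bipartite graph `D_i^k` (between `i`-th entry `2` and
`i`-th entry `3`, with all other entries differing by at most `1`). -/
def DAdj {k : ℕ} (i : Fin k) (x y : Fin k → Fin 3) : Prop :=
  ((x i = 1 ∧ y i = 2) ∨ (x i = 2 ∧ y i = 1)) ∧ ∀ t, t ≠ i → near3 (x t) (y t)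

/-- The graph `K̄_[k] ∘ H2` on `[k] ⊔ [3]^k`. -/
def comp3 {k : ℕ} (H2 : SimpleGraph (Fin k → Fin 3)) :
    SimpleGraph (Fin k ⊕ (Fin k → Fin 3)) where
  Adj a b :=
    match a, b with
    | Sum.inl _, Sum.inl _ => False
    | Sum.inr x, Sum.inr y => H2.Adj x y
    | Sum.inl i, Sum.inr x => x i = 0
    | Sum.inr x, Sum.inl i => x i = 0
  symm := by
    refine ⟨?_⟩
    rintro (i | x) (j | y) h
    · exact h
    · exact h
    · exact h
    · exact H2.adj_symm h
  loopless := by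
    refine ⟨?_⟩
    rintro (i | x) h
    · exact h
    · exact H2.ne_of_adj h rfl

/-- The defining condition of `C_k`: every edge of `H2` lies in some `C_i^k` or `D_i^k`;
for each `i` the edges of `H2` in `C_i^k` cover `[3]^k_i(2)`, and the edges of `H2` in
`D_i^k` cover `S_i^k`. -/
def CCond {k : ℕ} (H2 : SimpleGraph (Fin k → Fin 3)) : Prop :=
  (∀ x y, H2.Adj x y → ∃ i, CAdj i x y ∨ DAdj i x y) ∧
  (∀ (i : Fin k) (x : Fin k → Fin 3), x i = 1 → ∃ y, H2.Adj x y ∧ CAdj i x y) ∧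
  (∀ (i : Fin k) (x : Fin k → Fin 3), x i = 2 → (∀ t, x t ≠ 0) →
    ∃ y, H2.Adj x y ∧ DAdj i x y)

/-- The family `C_k`, as a set of graphs on `[k] ⊔ [3]^k`. -/
def Cset (k : ℕ) : Set (SimpleGraph (Fin k ⊕ (Fin k → Fin 3))) :=
  {G | ∃ H2, CCond H2 ∧ G = comp3 H2}

/-- The graph `Γ_k` on `[3]^k`: distinct tuples are adjacent when all their entries differ
by at most `1`. -/
def GammaK (k : ℕ) : SimpleGraph (Fin k → Fin 3) :=
  SimpleGraph.fromRel fun x y => ∀ i, near3 (x i) (y i)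

/-- `H2` is `k`-minimal. -/
def KMinimalC {k : ℕ} (H2 : SimpleGraph (Fin k → Fin 3)) : Prop :=
  comp3 H2 ∈ Cset k ∧
    ∀ H2' : SimpleGraph (Fin k → Fin 3), H2' < H2 → comp3 H2' ∉ Cset k

instance near3.decRel : DecidableRel near3 := fun a b =>
  inferInstanceAs (Decidable (_ ∧ _))

instance GammaK.decAdj (k : ℕ) : DecidableRel (GammaK k).Adj := fun x y =>
  decidable_of_iff _ (SimpleGraph.fromRel_adj _ x y).symm

lemma near3_refl (a : Fin 3) : near3 a a := ⟨Nat.le_succ _, Nat.le_succ _⟩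

lemma near3_symm {a b : Fin 3} (h : near3 a b) : near3 b a := ⟨h.2, h.1⟩

lemma gammaK_adj {k : ℕ} {x y : Fin k → Fin 3} :
    (GammaK k).Adj x y ↔ x ≠ y ∧ ∀ i, near3 (x i) (y i) := by
  rw [GammaK, SimpleGraph.fromRel_adj]
  constructor
  · rintro ⟨hne, h | h⟩
    · exact ⟨hne, h⟩
    · exact ⟨hne, fun i => near3_symm (h i)⟩
  · rintro ⟨hne, h⟩; exact ⟨hne, Or.inl h⟩

lemma card_near3_pairs : Fintype.card {q : Fin 3 × Fin 3 // near3 q.1 q.2} = 7 := by decide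

lemma card_all_near3 (k : ℕ) :
    Fintype.card {p : (Fin k → Fin 3) × (Fin k → Fin 3) // ∀ i, near3 (p.1 i) (p.2 i)}
      = 7 ^ k := by
  have e : {p : (Fin k → Fin 3) × (Fin k → Fin 3) // ∀ i, near3 (p.1 i) (p.2 i)} ≃
      (Fin k → {q : Fin 3 × Fin 3 // near3 q.1 q.2}) :=
    { toFun := fun p i => ⟨(p.1.1 i, p.1.2 i), p.2 i⟩
      invFun := fun f => ⟨(fun i => (f i).1.1, fun i => (f i).1.2), fun i => (f i).2⟩
      left_inv := fun p => rfl
      right_inv := fun f => rfl }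
  rw [Fintype.card_congr e]
  simp [card_near3_pairs]

open Finset in
lemma two_mul_gamma_card (k : ℕ) [DecidableRel (GammaK k).Adj] :
    2 * (GammaK k).edgeFinset.card = 7 ^ k - 3 ^ k := by
  rw [SimpleGraph.two_mul_card_edgeFinset]
  have hfilter : (univ.filter fun (x, y) => (GammaK k).Adj x y) =
      (univ.filter fun p : (Fin k → Fin 3) × (Fin k → Fin 3) =>
        ∀ i, near3 (p.1 i) (p.2 i)) \ (univ.filter fun p : (Fin k → Fin 3) × (Fin k → Fin 3) => p.1 = p.2) := by
    ext p
    simp only [mem_filter, mem_sdiff, mem_univ, true_and]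
    rw [gammaK_adj]
    tauto
  rw [hfilter, card_sdiff_of_subset ?_]
  · have h1 : (univ.filter fun p : (Fin k → Fin 3) × (Fin k → Fin 3) =>
        ∀ i, near3 (p.1 i) (p.2 i)).card = 7 ^ k := by
      rw [← Fintype.card_subtype, card_all_near3]
    have h2 : (univ.filter fun p : (Fin k → Fin 3) × (Fin k → Fin 3) => p.1 = p.2).card
        = 3 ^ k := by
      rw [← Fintype.card_subtype]
      have e : {p : (Fin k → Fin 3) × (Fin k → Fin 3) // p.1 = p.2} ≃ (Fin k → Fin 3) :=
        { toFun := fun p => p.1.1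
          invFun := fun x => ⟨(x, x), rfl⟩
          left_inv := by rintro ⟨⟨a, b⟩, h⟩; cases h; rfl
          right_inv := fun x => rfl }
      rw [Fintype.card_congr e]
      simp
    rw [h1, h2]
  · intro p hp
    simp only [mem_filter, mem_univ, true_and] at hp ⊢
    rw [hp]
    exact fun i => near3_refl _

lemma comp3_inj {k : ℕ} {H H' : SimpleGraph (Fin k → Fin 3)} (h : comp3 H = comp3 H') :
    H = H' := by
  ext x y
  have := congrArg (fun G => SimpleGraph.Adj G (Sum.inr x) (Sum.inr y)) h
  simpa [comp3] using this

lemma cadj_near {k : ℕ} {i : Fin k} {x y : Fin k → Fin 3} (h : CAdj i x y ∨ DAdj i x y) :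
    ∀ t, near3 (x t) (y t) := by
  intro t
  by_cases ht : t = i
  · subst ht
    rcases h with ⟨h1, _⟩ | ⟨h1, _⟩ <;> rcases h1 with ⟨hx, hy⟩ | ⟨hx, hy⟩ <;>
      rw [hx, hy] <;> exact ⟨by norm_num, by norm_num⟩
  · rcases h with ⟨_, h2⟩ | ⟨_, h2⟩ <;> exact h2 t ht

lemma le_gamma {k : ℕ} {H2 : SimpleGraph (Fin k → Fin 3)} (h : CCond H2) :
    H2 ≤ GammaK k := by
  intro x y hxy
  rw [gammaK_adj]
  obtain ⟨i, hi⟩ := h.1 x y hxy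
  exact ⟨hxy.ne, cadj_near hi⟩

/-- **Corollary.** If `K̄_[k] ∘ H2 ∈ C_k` (`k ≥ 2`), then `|E(H2)| ≤ (7^k − 3^k)/2`
(equivalently `2 · |E(H2)| ≤ 7^k − 3^k`), with equality iff `H2 = Γ_k`. -/
theorem Cset_size_max (k : ℕ) (hk : 2 ≤ k) (H2 : SimpleGraph (Fin k → Fin 3))
    [DecidableRel H2.Adj] (h : comp3 H2 ∈ Cset k) :
    2 * H2.edgeFinset.card ≤ 7 ^ k - 3 ^ k ∧
    (2 * H2.edgeFinset.card = 7 ^ k - 3 ^ k ↔ H2 = GammaK k) := by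
  obtain ⟨H2', hc, heq⟩ := h
  have hH : CCond H2 := comp3_inj heq ▸ hc
  have hle : H2 ≤ GammaK k := le_gamma hH
  have hsub : H2.edgeFinset ⊆ (GammaK k).edgeFinset :=
    SimpleGraph.edgeFinset_mono hle
  have hcard : H2.edgeFinset.card ≤ (GammaK k).edgeFinset.card :=
    Finset.card_le_card hsub
  have hg := two_mul_gamma_card k
  constructor
  · omega
  · constructor
    · intro he
      have : H2.edgeFinset.card = (GammaK k).edgeFinset.card := by omega
      have := Finset.eq_of_subset_of_card_le hsub (le_of_eq this.symm)
      exact SimpleGraph.edgeFinset_inj.mp this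
    · intro he
      subst he
      rw [← hg]
      exact congrArg (2 * Finset.card ·) (Finset.coe_injective (by simp))
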